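/- Let ψ_0, ψ_1, φ_0, φ_1 be unit vectors in C^2 with ψ_0 ⊥ ψ_1 and φ_0 ⊥ φ_1. If the superposition (1/2)(e_0 ⊗ (ψ_0 + φ_0) + e_1 ⊗ (ψ_1 + φ_1)) is a unit vector whose two components (ψ_0+φ_0)/√2 and (ψ_1+φ_1)/√2 are orthonormal, then the operator U = |φ_0⟩⟨ψ_0| + |φ_1⟩⟨ψ_1| satisfies U + U† = 0 (U is anti-Hermitian); and conversely, if U is anti-Hermitian then those two components are orthonormal. -/

import Mathlib

open scoped Matrix

noncomputable section

abbrev Qubit := EuclideanSpace ℂ (Fin 2)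

def ketBra (a b : Qubit) : Matrix (Fin 2) (Fin 2) ℂ :=
  Matrix.vecMulVec a (star (b : Fin 2 → ℂ))

local notation "𝓒" => (starRingEnd ℂ)

lemma completeness (ψ0 ψ1 : Qubit) (hψ : Orthonormal ℂ ![ψ0, ψ1]) (i j : Fin 2) :
    ψ0 i * 𝓒 (ψ0 j) + ψ1 i * 𝓒 (ψ1 j) = if i = j then 1 else 0 := by
  have h := orthonormal_iff_ite.mp hψ
  set A : Matrix (Fin 2) (Fin 2) ℂ := Matrix.of fun k m => 𝓒 (![ψ0, ψ1] k m) with hAdef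
  have hA : A * Aᴴ = 1 := by
    ext k l
    have hkl := h k l
    simp [Matrix.mul_apply, Matrix.conjTranspose_apply, hAdef, PiLp.inner_apply,
      RCLike.inner_apply, Fin.sum_univ_two, Matrix.one_apply] at hkl ⊢
    fin_cases k <;> fin_cases l <;> simp_all <;> linear_combination hkl
  have hA' : Aᴴ * A = 1 := mul_eq_one_comm.mp hA
  have := congrFun (congrFun hA' i) j
  simpa [Matrix.mul_apply, Matrix.conjTranspose_apply, hAdef, Fin.sum_univ_two,
    Matrix.one_apply] using this

theorem stmt_4 (ψ0 ψ1 φ0 φ1 : Qubit)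
    (hψ : Orthonormal ℂ ![ψ0, ψ1]) (hφ : Orthonormal ℂ ![φ0, φ1]) :
    Orthonormal ℂ
        ![((Real.sqrt 2 : ℂ))⁻¹ • (ψ0 + φ0), ((Real.sqrt 2 : ℂ))⁻¹ • (ψ1 + φ1)]
      ↔ (ketBra φ0 ψ0 + ketBra φ1 ψ1) + (ketBra φ0 ψ0 + ketBra φ1 ψ1)ᴴ = 0 := by
  have comp := completeness ψ0 ψ1 hψ
  have hψ' := orthonormal_iff_ite.mp hψ
  have hφ' := orthonormal_iff_ite.mp hφ
  have hψ00 := hψ' 0 0; have hψ01 := hψ' 0 1; have hψ10 := hψ' 1 0; have hψ11 := hψ' 1 1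
  have hφ00 := hφ' 0 0; have hφ01 := hφ' 0 1; have hφ10 := hφ' 1 0; have hφ11 := hφ' 1 1
  simp only [PiLp.inner_apply, RCLike.inner_apply, Fin.sum_univ_two, Matrix.cons_val_zero,
    Matrix.cons_val_one, Matrix.head_cons, if_pos, if_neg, Fin.zero_eq_one_iff,
    Fin.one_eq_zero_iff] at hψ00 hψ01 hψ10 hψ11 hφ00 hφ01 hφ10 hφ11
  norm_num at hψ00 hψ01 hψ10 hψ11 hφ00 hφ01 hφ10 hφ11
  have hinv : ((Real.sqrt 2 : ℂ))⁻¹ * ((Real.sqrt 2 : ℂ))⁻¹ = 1/2 := by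
    rw [← mul_inv]
    norm_cast
    rw [Real.mul_self_sqrt (by norm_num)]
    norm_num
  rw [orthonormal_iff_ite]
  constructor
  · -- orthonormal → anti-Hermitian
    intro h
    have h00 := h 0 0; have h01 := h 0 1; have h11 := h 1 1
    simp [PiLp.inner_apply, RCLike.inner_apply, Fin.sum_univ_two, PiLp.smul_apply,
      PiLp.add_apply, smul_eq_mul, map_mul, map_add, Complex.conj_ofReal, map_inv₀, -inner_self_eq_norm_sq_to_K] at h00 h01 h11
    have hα : 𝓒 (ψ0 0) * φ0 0 + 𝓒 (ψ0 1) * φ0 1 + ψ0 0 * 𝓒 (φ0 0) + ψ0 1 * 𝓒 (φ0 1) = 0 := by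
      linear_combination 2*h00 - 2*((Real.sqrt 2:ℂ))⁻¹*((Real.sqrt 2:ℂ))⁻¹*hψ00
        - 2*((Real.sqrt 2:ℂ))⁻¹*((Real.sqrt 2:ℂ))⁻¹*hφ00
        - (2*(𝓒 (ψ0 0) * φ0 0 + 𝓒 (ψ0 1) * φ0 1 + ψ0 0 * 𝓒 (φ0 0) + ψ0 1 * 𝓒 (φ0 1)) + 4)*hinv
    have hβ : 𝓒 (ψ0 0) * φ1 0 + 𝓒 (ψ0 1) * φ1 1 + 𝓒 (φ0 0) * ψ1 0 + 𝓒 (φ0 1) * ψ1 1 = 0 := by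
      linear_combination 2*h01 - 2*((Real.sqrt 2:ℂ))⁻¹*((Real.sqrt 2:ℂ))⁻¹*hψ01
        - 2*((Real.sqrt 2:ℂ))⁻¹*((Real.sqrt 2:ℂ))⁻¹*hφ01
        - 2*(𝓒 (ψ0 0) * φ1 0 + 𝓒 (ψ0 1) * φ1 1 + 𝓒 (φ0 0) * ψ1 0 + 𝓒 (φ0 1) * ψ1 1)*hinv
    have hδ : 𝓒 (ψ1 0) * φ1 0 + 𝓒 (ψ1 1) * φ1 1 + ψ1 0 * 𝓒 (φ1 0) + ψ1 1 * 𝓒 (φ1 1) = 0 := by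
      linear_combination 2*h11 - 2*((Real.sqrt 2:ℂ))⁻¹*((Real.sqrt 2:ℂ))⁻¹*hψ11
        - 2*((Real.sqrt 2:ℂ))⁻¹*((Real.sqrt 2:ℂ))⁻¹*hφ11
        - (2*(𝓒 (ψ1 0) * φ1 0 + 𝓒 (ψ1 1) * φ1 1 + ψ1 0 * 𝓒 (φ1 0) + ψ1 1 * 𝓒 (φ1 1)) + 4)*hinv
    have hγ : 𝓒 (ψ1 0) * φ0 0 + 𝓒 (ψ1 1) * φ0 1 + 𝓒 (φ1 0) * ψ0 0 + 𝓒 (φ1 1) * ψ0 1 = 0 := by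
      have := congrArg 𝓒 hβ
      simp only [map_add, map_mul, Complex.conj_conj, map_zero] at this
      linear_combination this
    -- basis expansions
    have C00 := comp 0 0; have C01 := comp 0 1; have C10 := comp 1 0; have C11 := comp 1 1
    norm_num at C00 C01 C10 C11
    have EP : ∀ i, φ0 i = (𝓒 (ψ0 0) * φ0 0 + 𝓒 (ψ0 1) * φ0 1) * ψ0 i
        + (𝓒 (ψ1 0) * φ0 0 + 𝓒 (ψ1 1) * φ0 1) * ψ1 i := by
      intro i; fin_cases i <;> simp only [Fin.mk_zero, Fin.mk_one, Fin.isValue]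
      · linear_combination (-(φ0 0)) * C00 - (φ0 1) * C01
      · linear_combination (-(φ0 0)) * C10 - (φ0 1) * C11
    have EQ : ∀ i, φ1 i = (𝓒 (ψ0 0) * φ1 0 + 𝓒 (ψ0 1) * φ1 1) * ψ0 i
        + (𝓒 (ψ1 0) * φ1 0 + 𝓒 (ψ1 1) * φ1 1) * ψ1 i := by
      intro i; fin_cases i <;> simp only [Fin.mk_zero, Fin.mk_one, Fin.isValue]
      · linear_combination (-(φ1 0)) * C00 - (φ1 1) * C01
      · linear_combination (-(φ1 0)) * C10 - (φ1 1) * C11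
    have cEP : ∀ j, 𝓒 (φ0 j) = (ψ0 0 * 𝓒 (φ0 0) + ψ0 1 * 𝓒 (φ0 1)) * 𝓒 (ψ0 j)
        + (ψ1 0 * 𝓒 (φ0 0) + ψ1 1 * 𝓒 (φ0 1)) * 𝓒 (ψ1 j) := by
      intro j
      have := congrArg 𝓒 (EP j)
      simp only [map_add, map_mul, Complex.conj_conj] at this
      linear_combination this
    have cEQ : ∀ j, 𝓒 (φ1 j) = (ψ0 0 * 𝓒 (φ1 0) + ψ0 1 * 𝓒 (φ1 1)) * 𝓒 (ψ0 j)
        + (ψ1 0 * 𝓒 (φ1 0) + ψ1 1 * 𝓒 (φ1 1)) * 𝓒 (ψ1 j) := by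
      intro j
      have := congrArg 𝓒 (EQ j)
      simp only [map_add, map_mul, Complex.conj_conj] at this
      linear_combination this
    ext i j
    simp only [ketBra, Matrix.add_apply, Matrix.conjTranspose_apply, Matrix.vecMulVec_apply,
      Pi.star_apply, Matrix.zero_apply, RCLike.star_def, map_add, map_mul, Complex.conj_conj]
    linear_combination (𝓒 (ψ0 j)) * EP i + (𝓒 (ψ1 j)) * EQ i + (ψ0 i) * cEP j + (ψ1 i) * cEQ j
      + (ψ0 i * 𝓒 (ψ0 j)) * hα + (ψ0 i * 𝓒 (ψ1 j)) * hβ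
      + (ψ1 i * 𝓒 (ψ0 j)) * hγ + (ψ1 i * 𝓒 (ψ1 j)) * hδ
  · -- anti-Hermitian → orthonormal
    intro H
    have hm : ∀ i j, φ0 i * 𝓒 (ψ0 j) + φ1 i * 𝓒 (ψ1 j)
        + 𝓒 (φ0 j) * ψ0 i + 𝓒 (φ1 j) * ψ1 i = 0 := by
      intro i j
      have := congrFun (congrFun H i) j
      simp only [ketBra, Matrix.add_apply, Matrix.conjTranspose_apply, Matrix.vecMulVec_apply,
        Pi.star_apply, Matrix.zero_apply, RCLike.star_def, map_add, map_mul, Complex.conj_conj] at this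
      linear_combination this
    have m00 := hm 0 0; have m01 := hm 0 1; have m10 := hm 1 0; have m11 := hm 1 1
    have hα : 𝓒 (ψ0 0) * φ0 0 + 𝓒 (ψ0 1) * φ0 1 + ψ0 0 * 𝓒 (φ0 0) + ψ0 1 * 𝓒 (φ0 1) = 0 := by
      linear_combination (𝓒 (ψ0 0) * ψ0 0)*m00 + (𝓒 (ψ0 0) * ψ0 1)*m01
        + (𝓒 (ψ0 1) * ψ0 0)*m10 + (𝓒 (ψ0 1) * ψ0 1)*m11
        - (𝓒 (ψ0 0) * φ0 0 + 𝓒 (ψ0 1) * φ0 1 + ψ0 0 * 𝓒 (φ0 0) + ψ0 1 * 𝓒 (φ0 1))*hψ00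
        - (𝓒 (ψ0 0) * φ1 0 + 𝓒 (ψ0 1) * φ1 1)*hψ10
        - (ψ0 0 * 𝓒 (φ1 0) + ψ0 1 * 𝓒 (φ1 1))*hψ01
    have hβ : 𝓒 (ψ0 0) * φ1 0 + 𝓒 (ψ0 1) * φ1 1 + 𝓒 (φ0 0) * ψ1 0 + 𝓒 (φ0 1) * ψ1 1 = 0 := by
      linear_combination (𝓒 (ψ0 0) * ψ1 0)*m00 + (𝓒 (ψ0 0) * ψ1 1)*m01
        + (𝓒 (ψ0 1) * ψ1 0)*m10 + (𝓒 (ψ0 1) * ψ1 1)*m11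
        - (𝓒 (ψ0 0) * φ1 0 + 𝓒 (ψ0 1) * φ1 1)*hψ11
        - (𝓒 (φ0 0) * ψ1 0 + 𝓒 (φ0 1) * ψ1 1)*hψ00
        - (𝓒 (ψ0 0) * φ0 0 + 𝓒 (ψ0 1) * φ0 1 + ψ1 0 * 𝓒 (φ1 0) + ψ1 1 * 𝓒 (φ1 1))*hψ01
    have hδ : 𝓒 (ψ1 0) * φ1 0 + 𝓒 (ψ1 1) * φ1 1 + ψ1 0 * 𝓒 (φ1 0) + ψ1 1 * 𝓒 (φ1 1) = 0 := by
      linear_combination (𝓒 (ψ1 0) * ψ1 0)*m00 + (𝓒 (ψ1 0) * ψ1 1)*m01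
        + (𝓒 (ψ1 1) * ψ1 0)*m10 + (𝓒 (ψ1 1) * ψ1 1)*m11
        - (𝓒 (ψ1 0) * φ1 0 + 𝓒 (ψ1 1) * φ1 1 + ψ1 0 * 𝓒 (φ1 0) + ψ1 1 * 𝓒 (φ1 1))*hψ11
        - (𝓒 (ψ1 0) * φ0 0 + 𝓒 (ψ1 1) * φ0 1)*hψ01
        - (ψ1 0 * 𝓒 (φ0 0) + ψ1 1 * 𝓒 (φ0 1))*hψ10
    have hγ : 𝓒 (ψ1 0) * φ0 0 + 𝓒 (ψ1 1) * φ0 1 + 𝓒 (φ1 0) * ψ0 0 + 𝓒 (φ1 1) * ψ0 1 = 0 := by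
      have := congrArg 𝓒 hβ
      simp only [map_add, map_mul, Complex.conj_conj, map_zero] at this
      linear_combination this
    intro i j
    fin_cases i <;> fin_cases j <;>
      simp [PiLp.inner_apply, RCLike.inner_apply, Fin.sum_univ_two, PiLp.smul_apply,
        PiLp.add_apply, smul_eq_mul, map_mul, map_add, Complex.conj_ofReal, map_inv₀, -inner_self_eq_norm_sq_to_K]
    · linear_combination ((Real.sqrt 2:ℂ))⁻¹*((Real.sqrt 2:ℂ))⁻¹*(hψ00 + hφ00 + hα) + 2*hinv
    · linear_combination ((Real.sqrt 2:ℂ))⁻¹*((Real.sqrt 2:ℂ))⁻¹*(hψ01 + hφ01 + hβ)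
    · linear_combination ((Real.sqrt 2:ℂ))⁻¹*((Real.sqrt 2:ℂ))⁻¹*(hψ10 + hφ10 + hγ)
    · linear_combination ((Real.sqrt 2:ℂ))⁻¹*((Real.sqrt 2:ℂ))⁻¹*(hψ11 + hφ11 + hδ) + 2*hinv
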